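/- Let q ∈ Δ₄. There exist θ, φ ∈ ℝ such that the matrix M(q,θ,φ) has a negative eigenvalue (i.e. is not positive semidefinite) if and only if 4q₁q₄ < (q₂ − q₃)². (In particular the minimum over θ is attained at sin²(2θ) = 1.) -/

import Mathlib

open Finset
open scoped ComplexOrder

/-- The probability simplex Δ₄ ⊂ ℝ⁴. -/
def inSimplex (p : Fin 4 → ℝ) : Prop := (∀ i, 0 ≤ p i) ∧ ∑ i, p i = 1

/-- The entanglement witness f(q) = 4 q₁ q₄ − (q₂ − q₃)². -/
noncomputable def fwit (q : Fin 4 → ℝ) : ℝ := 4 * q 0 * q 3 - (q 1 - q 2) ^ 2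

/-- The partial transpose M(q,θ,φ) of the rotated two-qubit state:
M₁₁ = q₁, M₂₂ = q₂cos²θ + q₃sin²θ, M₃₃ = q₂sin²θ + q₃cos²θ, M₄₄ = q₄,
M₁₄ = ((q₃−q₂)/2)·sin(2θ)·e^{iφ}, M₄₁ = conj(M₁₄), all other entries zero. -/
noncomputable def Mmat (q : Fin 4 → ℝ) (θ φ : ℝ) : Matrix (Fin 4) (Fin 4) ℂ :=
  !![(q 0 : ℂ), 0, 0, (((q 2 - q 1) / 2 * Real.sin (2 * θ) : ℝ) : ℂ) * Complex.exp (Complex.I * φ);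
     0, ((q 1 * Real.cos θ ^ 2 + q 2 * Real.sin θ ^ 2 : ℝ) : ℂ), 0, 0;
     0, 0, ((q 1 * Real.sin θ ^ 2 + q 2 * Real.cos θ ^ 2 : ℝ) : ℂ), 0;
     (((q 2 - q 1) / 2 * Real.sin (2 * θ) : ℝ) : ℂ) * Complex.exp (-(Complex.I * φ)), 0, 0,
       (q 3 : ℂ)]

lemma quadForm (q : Fin 4 → ℝ) (θ φ : ℝ) (x : Fin 4 → ℂ) :
    dotProduct (star x) ((Mmat q θ φ).mulVec x) =
      (((q 0) * Complex.normSq (x 0)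
        + (q 1 * Real.cos θ ^ 2 + q 2 * Real.sin θ ^ 2) * Complex.normSq (x 1)
        + (q 1 * Real.sin θ ^ 2 + q 2 * Real.cos θ ^ 2) * Complex.normSq (x 2)
        + (q 3) * Complex.normSq (x 3)
        + ((q 2 - q 1) / 2 * Real.sin (2 * θ)) *
            (2 * (Complex.exp (Complex.I * φ) * (starRingEnd ℂ) (x 0) * x 3).re) : ℝ) : ℂ) := by
  have he : Complex.exp (-(Complex.I * φ)) = (starRingEnd ℂ) (Complex.exp (Complex.I * φ)) := by
    rw [← Complex.exp_conj]; congr 1; simp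
  have h1 : dotProduct (star x) ((Mmat q θ φ).mulVec x) =
      ((q 0 : ℝ) : ℂ) * (x 0 * (starRingEnd ℂ) (x 0))
      + ((q 1 * Real.cos θ ^ 2 + q 2 * Real.sin θ ^ 2 : ℝ) : ℂ) * (x 1 * (starRingEnd ℂ) (x 1))
      + ((q 1 * Real.sin θ ^ 2 + q 2 * Real.cos θ ^ 2 : ℝ) : ℂ) * (x 2 * (starRingEnd ℂ) (x 2))
      + ((q 3 : ℝ) : ℂ) * (x 3 * (starRingEnd ℂ) (x 3))
      + (((q 2 - q 1) / 2 * Real.sin (2 * θ) : ℝ) : ℂ) *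
          ((Complex.exp (Complex.I * φ) * (starRingEnd ℂ) (x 0) * x 3)
            + (starRingEnd ℂ) (Complex.exp (Complex.I * φ) * (starRingEnd ℂ) (x 0) * x 3)) := by
    simp [Mmat, Matrix.mulVec, dotProduct, Fin.sum_univ_four, he,
      Matrix.vecHead, Matrix.vecTail, map_mul]
    ring
  rw [h1, Complex.add_conj, Complex.mul_conj, Complex.mul_conj, Complex.mul_conj,
    Complex.mul_conj]
  push_cast
  ring

lemma hermMmat (q : Fin 4 → ℝ) (θ φ : ℝ) : (Mmat q θ φ).IsHermitian := by
  have he : (starRingEnd ℂ) (Complex.exp (Complex.I * φ)) = Complex.exp (-(Complex.I * φ)) := by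
    rw [← Complex.exp_conj]; congr 1; simp
  have he' : (starRingEnd ℂ) (Complex.exp (-(Complex.I * φ))) = Complex.exp (Complex.I * φ) := by
    rw [← Complex.exp_conj]; congr 1; simp
  ext i j
  fin_cases i <;> fin_cases j <;>
    simp [Mmat, Matrix.conjTranspose_apply, map_mul, he, he', Complex.conj_ofReal,
      Matrix.vecHead, Matrix.vecTail, ← Complex.ofReal_sin, ← Complex.ofReal_cos,
      ← Complex.ofReal_pow]

lemma core_ineq (q0 q3 A B c r : ℝ) (hq0 : 0 ≤ q0) (hq3 : 0 ≤ q3) (hA : 0 ≤ A) (hB : 0 ≤ B)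
    (h1 : c ^ 2 ≤ q0 * q3) (h2 : r ^ 2 ≤ A * B) : 0 ≤ q0 * A + q3 * B + c * (2 * r) := by
  nlinarith [sq_nonneg (q0 * A - q3 * B), mul_nonneg (sub_nonneg.2 h1) (mul_nonneg hA hB),
    mul_nonneg (sq_nonneg c) (sub_nonneg.2 h2), mul_nonneg (mul_nonneg hq0 hA) (mul_nonneg hq3 hB),
    add_nonneg (mul_nonneg hq0 hA) (mul_nonneg hq3 hB), sq_nonneg (q0*A + q3*B + 2*c*r),
    sq_nonneg (q0*A + q3*B - 2*c*r)]

lemma psd_of_witness (q : Fin 4 → ℝ) (hq : ∀ i, 0 ≤ q i)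
    (hle : (q 1 - q 2) ^ 2 ≤ 4 * q 0 * q 3) (θ φ : ℝ) : (Mmat q θ φ).PosSemidef := by
  refine Matrix.PosSemidef.of_dotProduct_mulVec_nonneg (hermMmat q θ φ) fun x => ?_
  rw [quadForm]
  rw [show ((0 : ℂ) = ((0 : ℝ) : ℂ)) by norm_num, Complex.real_le_real]
  set c : ℝ := (q 2 - q 1) / 2 * Real.sin (2 * θ) with hc
  set w : ℂ := Complex.exp (Complex.I * φ) * (starRingEnd ℂ) (x 0) * x 3 with hw
  have hA : 0 ≤ Complex.normSq (x 0) := Complex.normSq_nonneg _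
  have hB : 0 ≤ Complex.normSq (x 3) := Complex.normSq_nonneg _
  have hc2 : c ^ 2 ≤ q 0 * q 3 := by
    have hs : Real.sin (2 * θ) ^ 2 ≤ 1 := Real.sin_sq_le_one _
    rw [hc]
    nlinarith [sq_nonneg (q 2 - q 1), mul_nonneg (sq_nonneg (q 2 - q 1)) (sub_nonneg.2 hs)]
  have hr2 : w.re ^ 2 ≤ Complex.normSq (x 0) * Complex.normSq (x 3) := by
    have h1 : w.re ^ 2 ≤ Complex.normSq w := by
      have := Complex.normSq_apply w
      nlinarith [sq_nonneg w.im]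
    have h2 : Complex.normSq w = Complex.normSq (x 0) * Complex.normSq (x 3) := by
      rw [hw, map_mul, map_mul, Complex.normSq_conj]
      have : Complex.normSq (Complex.exp (Complex.I * φ)) = 1 := by
        rw [Complex.normSq_eq_norm_sq, mul_comm, Complex.norm_exp_ofReal_mul_I]
        norm_num
      rw [this, one_mul]
    rw [h2] at h1; exact h1
  have hmid1 : 0 ≤ (q 1 * Real.cos θ ^ 2 + q 2 * Real.sin θ ^ 2) * Complex.normSq (x 1) :=
    mul_nonneg (add_nonneg (mul_nonneg (hq 1) (sq_nonneg _)) (mul_nonneg (hq 2) (sq_nonneg _)))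
      (Complex.normSq_nonneg _)
  have hmid2 : 0 ≤ (q 1 * Real.sin θ ^ 2 + q 2 * Real.cos θ ^ 2) * Complex.normSq (x 2) :=
    mul_nonneg (add_nonneg (mul_nonneg (hq 1) (sq_nonneg _)) (mul_nonneg (hq 2) (sq_nonneg _)))
      (Complex.normSq_nonneg _)
  have := core_ineq (q 0) (q 3) (Complex.normSq (x 0)) (Complex.normSq (x 3)) c w.re
    (hq 0) (hq 3) hA hB hc2 hr2
  linarith

lemma not_psd_of_witness (q : Fin 4 → ℝ) (hq : ∀ i, 0 ≤ q i)
    (hlt : 4 * q 0 * q 3 < (q 1 - q 2) ^ 2) :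
    ¬ (Mmat q (Real.pi / 4) 0).PosSemidef := by
  intro hpsd
  have hsin : Real.sin (2 * (Real.pi / 4)) = 1 := by
    rw [show 2 * (Real.pi / 4) = Real.pi / 2 by ring, Real.sin_pi_div_two]
  set c : ℝ := (q 2 - q 1) / 2 with hc
  have hc2 : q 0 * q 3 < c ^ 2 := by rw [hc]; nlinarith
  -- test with vector (a, 0, 0, b)
  have key : ∀ a b : ℝ, 0 ≤ q 0 * a ^ 2 + q 3 * b ^ 2 + c * (2 * (a * b)) := by
    intro a b
    have h := hpsd.dotProduct_mulVec_nonneg ![(a : ℂ), 0, 0, (b : ℂ)]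
    rw [quadForm] at h
    have hval : Complex.exp (Complex.I * (0:ℝ)) *
        (starRingEnd ℂ) ((![(a : ℂ), 0, 0, (b : ℂ)]) 0) * (![(a : ℂ), 0, 0, (b : ℂ)]) 3
        = ((a * b : ℝ) : ℂ) := by
      simp [Complex.conj_ofReal]
    rw [hval] at h
    simp only [hsin] at h
    rw [show ((0 : ℂ) = ((0 : ℝ) : ℂ)) by norm_num, Complex.real_le_real] at h
    simp [Complex.normSq_ofReal] at h
    rw [← hc] at h
    nlinarith [h]
  rcases eq_or_lt_of_le (hq 0) with h0 | h0
  · -- q 0 = 0, so c ≠ 0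
    have hcne : c ≠ 0 := by
      intro h; rw [h] at hc2; simp at hc2; nlinarith [mul_nonneg (hq 0) (hq 3)]
    have := key (-(q 3 + 1) / (2 * c)) 1
    have hcc : c * (2 * ((-(q 3 + 1) / (2 * c)) * 1)) = -(q 3 + 1) := by
      field_simp
    rw [← h0] at this
    rw [hcc] at this
    simp at this
    linarith
  · -- q 0 > 0
    have := key (-c) (q 0)
    nlinarith [this, mul_pos h0 (sub_pos.mpr hc2)]

theorem entanglable_iff_witness (q : Fin 4 → ℝ) (hq : inSimplex q) :
    (∃ θ φ : ℝ, ¬ (Mmat q θ φ).PosSemidef) ↔ 4 * q 0 * q 3 < (q 1 - q 2) ^ 2 := by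
  obtain ⟨hq0, -⟩ := hq
  constructor
  · rintro ⟨θ, φ, hn⟩
    by_contra hw
    push_neg at hw
    exact hn (psd_of_witness q hq0 hw θ φ)
  · intro h
    exact ⟨Real.pi / 4, 0, not_psd_of_witness q hq0 h⟩
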